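/- Let T₁, ..., Tₙ be commuting contractions on a complex Hilbert space H such that the product T₁T₂⋯Tₙ is an isometry. Then each Tⱼ is an isometry. -/

import Mathlib

/-- Commuting contractions whose product is an isometry are all isometries. -/
theorem stmt_12 {H : Type*} [NormedAddCommGroup H] [InnerProductSpace ℂ H]
    (n : ℕ) (T : Fin n → H →L[ℂ] H)
    (hcontr : ∀ j, ‖T j‖ ≤ 1)
    (hcomm : ∀ j k, T j * T k = T k * T j)
    (hiso : ∀ x : H, ‖(List.ofFn T).prod x‖ = ‖x‖) :
    ∀ j, ∀ x : H, ‖T j x‖ = ‖x‖ := by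
  intro j x
  set L := List.ofFn T with hL
  have hjlt : (j : ℕ) < L.length := by simp [hL, j.isLt]
  have hsplit : L = L.take j ++ L[(j:ℕ)] :: L.drop ((j:ℕ)+1) := by
    conv_lhs => rw [← List.take_append_drop (j:ℕ) L]
    rw [List.drop_eq_getElem_cons hjlt]
  have hget : L[(j:ℕ)] = T j := by simp [hL]
  have hcommj : Commute (T j) (L.drop ((j:ℕ)+1)).prod := by
    apply Commute.list_prod_right
    intro y hy
    have : y ∈ L := List.mem_of_mem_drop hy
    rw [hL, List.mem_ofFn] at this
    obtain ⟨k, rfl⟩ := this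
    exact hcomm j k
  have hprod : L.prod = ((L.take j).prod * (L.drop ((j:ℕ)+1)).prod) * T j := by
    conv_lhs => rw [hsplit]
    rw [List.prod_append, List.prod_cons, hget, hcommj.eq, mul_assoc]
  have hnorm1 : ∀ (l : List (H →L[ℂ] H)), (∀ y ∈ l, ‖y‖ ≤ 1) → ‖l.prod‖ ≤ 1 := by
    intro l hl
    induction l with
    | nil =>
      simp only [List.prod_nil, ContinuousLinearMap.one_def]
      exact ContinuousLinearMap.norm_id_le
    | cons a l ih =>
      rw [List.prod_cons]
      calc ‖a * l.prod‖ ≤ ‖a‖ * ‖l.prod‖ := norm_mul_le _ _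
      _ ≤ 1 * 1 := by
          exact mul_le_mul (hl a List.mem_cons_self)
            (ih fun y hy => hl y (List.mem_cons_of_mem _ hy)) (norm_nonneg _) zero_le_one
      _ = 1 := one_mul 1
  have hmem : ∀ y ∈ L, ‖y‖ ≤ 1 := by
    intro y hy
    rw [hL, List.mem_ofFn] at hy
    obtain ⟨k, rfl⟩ := hy
    exact hcontr k
  have hP : ‖(L.take j).prod * (L.drop ((j:ℕ)+1)).prod‖ ≤ 1 := by
    calc ‖(L.take j).prod * (L.drop ((j:ℕ)+1)).prod‖
        ≤ ‖(L.take j).prod‖ * ‖(L.drop ((j:ℕ)+1)).prod‖ := norm_mul_le _ _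
      _ ≤ 1 * 1 := mul_le_mul
          (hnorm1 _ fun y hy => hmem y (List.mem_of_mem_take hy))
          (hnorm1 _ fun y hy => hmem y (List.mem_of_mem_drop hy))
          (norm_nonneg _) zero_le_one
      _ = 1 := one_mul 1
  have h1 : ‖x‖ ≤ ‖T j x‖ := by
    calc ‖x‖ = ‖L.prod x‖ := (hiso x).symm
      _ = ‖((L.take j).prod * (L.drop ((j:ℕ)+1)).prod) (T j x)‖ := by
          rw [hprod]; rfl
      _ ≤ ‖(L.take j).prod * (L.drop ((j:ℕ)+1)).prod‖ * ‖T j x‖ :=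
          ContinuousLinearMap.le_opNorm _ _
      _ ≤ 1 * ‖T j x‖ := mul_le_mul_of_nonneg_right hP (norm_nonneg _)
      _ = ‖T j x‖ := one_mul _
  have h2 : ‖T j x‖ ≤ ‖x‖ := by
    calc ‖T j x‖ ≤ ‖T j‖ * ‖x‖ := ContinuousLinearMap.le_opNorm _ _
      _ ≤ 1 * ‖x‖ := mul_le_mul_of_nonneg_right (hcontr j) (norm_nonneg _)
      _ = ‖x‖ := one_mul _
  exact le_antisymm h2 h1
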